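/- Let ω(t,z) = K e^z Φ(z t^{−1/2} + (r + 1/2) t^{1/2}) − K e^{−rt} Φ(z t^{−1/2} + (r − 1/2) t^{1/2}), with K > 0, r > 0, z ∈ ℝ, t > 0. Then ω satisfies the PDE ∂ω/∂t = (1/2) ∂²ω/∂z² + (r − 1/2) ∂ω/∂z − r ω. -/

import Mathlib

open Real

/-- The standard normal cumulative distribution function. -/
noncomputable def stdNormalCDF (x : ℝ) : ℝ :=
  (Real.sqrt (2 * Real.pi))⁻¹ * ∫ y in Set.Iio x, Real.exp (-y ^ 2 / 2)

open MeasureTheory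

noncomputable def φg (x : ℝ) : ℝ := (Real.sqrt (2 * Real.pi))⁻¹ * Real.exp (-x ^ 2 / 2)

lemma gauss_integrable : Integrable (fun y : ℝ => Real.exp (-y ^ 2 / 2)) := by
  have := integrable_exp_neg_mul_sq (b := (1/2 : ℝ)) (by norm_num)
  convert this using 2 with y
  ring_nf

lemma hasDerivAt_stdNormalCDF (x : ℝ) : HasDerivAt stdNormalCDF (φg x) x := by
  have hfun : ∀ u : ℝ, stdNormalCDF u =
      (Real.sqrt (2 * Real.pi))⁻¹ * ((∫ y in Set.Iio (0:ℝ), Real.exp (-y ^ 2 / 2))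
        + ∫ y in (0:ℝ)..u, Real.exp (-y ^ 2 / 2)) := by
    intro u
    have h1 : (∫ y in Set.Iio u, Real.exp (-y ^ 2 / 2))
        - ∫ y in Set.Iio (0:ℝ), Real.exp (-y ^ 2 / 2)
        = ∫ y in (0:ℝ)..u, Real.exp (-y ^ 2 / 2) := by
      rw [← integral_Iic_eq_integral_Iio, ← integral_Iic_eq_integral_Iio]
      exact intervalIntegral.integral_Iic_sub_Iic gauss_integrable.integrableOn
        gauss_integrable.integrableOn
    rw [stdNormalCDF, ← h1]; ring
  have hder : HasDerivAt (fun u => ∫ y in (0:ℝ)..u, Real.exp (-y ^ 2 / 2))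
      (Real.exp (-x ^ 2 / 2)) x := by
    refine intervalIntegral.integral_hasDerivAt_right
      (gauss_integrable.intervalIntegrable) ?_ ?_
    · exact (Real.continuous_exp.comp (by continuity)).aestronglyMeasurable.stronglyMeasurableAtFilter
    · exact (Real.continuous_exp.comp (by continuity)).continuousAt
  have := (hder.const_add (∫ y in Set.Iio (0:ℝ), Real.exp (-y ^ 2 / 2))).const_mul
      ((Real.sqrt (2 * Real.pi))⁻¹)
  refine HasDerivAt.congr_deriv (this.congr_of_eventuallyEq ?_) rfl
  filter_upwards with u using (hfun u)

lemma key_id (K r t : ℝ) (ht : 0 < t) (y : ℝ) :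
    K * Real.exp y * φg (y / Real.sqrt t + (r + 1 / 2) * Real.sqrt t)
    = K * Real.exp (-r * t) * φg (y / Real.sqrt t + (r - 1 / 2) * Real.sqrt t) := by
  have hs : Real.sqrt t ≠ 0 := (Real.sqrt_pos.mpr ht).ne'
  have hs2 : Real.sqrt t * Real.sqrt t = t := Real.mul_self_sqrt ht.le
  have h : Real.exp y * Real.exp (-(y / Real.sqrt t + (r + 1 / 2) * Real.sqrt t) ^ 2 / 2)
      = Real.exp (-r * t) * Real.exp (-(y / Real.sqrt t + (r - 1 / 2) * Real.sqrt t) ^ 2 / 2) := by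
    rw [← Real.exp_add, ← Real.exp_add]
    congr 1
    field_simp
    linear_combination (-8 * r * Real.sqrt t ^ 2) * hs2
  unfold φg
  linear_combination (K * (Real.sqrt (2 * Real.pi))⁻¹) * h

/-- z-derivative (unsimplified). -/
lemma hasDerivAt_z (K r t : ℝ) (ht : 0 < t) (z : ℝ) :
    HasDerivAt (fun y => K * Real.exp y * stdNormalCDF (y / Real.sqrt t + (r + 1 / 2) * Real.sqrt t)
      - K * Real.exp (-r * t) * stdNormalCDF (y / Real.sqrt t + (r - 1 / 2) * Real.sqrt t))
      (K * Real.exp z * stdNormalCDF (z / Real.sqrt t + (r + 1 / 2) * Real.sqrt t)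
        + K * Real.exp z * (φg (z / Real.sqrt t + (r + 1 / 2) * Real.sqrt t) * (Real.sqrt t)⁻¹)
        - K * Real.exp (-r * t) * (φg (z / Real.sqrt t + (r - 1 / 2) * Real.sqrt t) * (Real.sqrt t)⁻¹)) z := by
  have hd : ∀ c : ℝ, HasDerivAt (fun y : ℝ => y / Real.sqrt t + c * Real.sqrt t)
      ((Real.sqrt t)⁻¹) z := by
    intro c
    simpa [one_div] using ((hasDerivAt_id z).div_const (Real.sqrt t)).add_const (c * Real.sqrt t)
  have hΦ1 := (hasDerivAt_stdNormalCDF (z / Real.sqrt t + (r + 1 / 2) * Real.sqrt t)).comp z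
      (hd (r + 1 / 2))
  have hΦ2 := (hasDerivAt_stdNormalCDF (z / Real.sqrt t + (r - 1 / 2) * Real.sqrt t)).comp z
      (hd (r - 1 / 2))
  have hE : HasDerivAt (fun y : ℝ => K * Real.exp y) (K * Real.exp z) z :=
    (Real.hasDerivAt_exp z).const_mul K
  have h1 := hE.mul hΦ1
  have h2 := hΦ2.const_mul (K * Real.exp (-r * t))
  have := h1.sub h2
  convert this using 1
  all_goals rfl

/-- simplified z-derivative. -/
lemma deriv_z (K r t : ℝ) (ht : 0 < t) (z : ℝ) :
    deriv (fun y => K * Real.exp y * stdNormalCDF (y / Real.sqrt t + (r + 1 / 2) * Real.sqrt t)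
      - K * Real.exp (-r * t) * stdNormalCDF (y / Real.sqrt t + (r - 1 / 2) * Real.sqrt t)) z
    = K * Real.exp z * stdNormalCDF (z / Real.sqrt t + (r + 1 / 2) * Real.sqrt t) := by
  rw [(hasDerivAt_z K r t ht z).deriv]
  linear_combination (Real.sqrt t)⁻¹ * key_id K r t ht z

/-- t-derivative. -/
lemma hasDerivAt_t (K r t : ℝ) (ht : 0 < t) (z : ℝ) :
    HasDerivAt (fun s => K * Real.exp z * stdNormalCDF (z / Real.sqrt s + (r + 1 / 2) * Real.sqrt s)
      - K * Real.exp (-r * s) * stdNormalCDF (z / Real.sqrt s + (r - 1 / 2) * Real.sqrt s))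
      (K * Real.exp z * (φg (z / Real.sqrt t + (r + 1 / 2) * Real.sqrt t)
          * (z * (-(1 / (2 * Real.sqrt t)) / Real.sqrt t ^ 2) + (r + 1 / 2) * (1 / (2 * Real.sqrt t))))
        - ((K * (Real.exp (-r * t) * (-r))) * stdNormalCDF (z / Real.sqrt t + (r - 1 / 2) * Real.sqrt t)
          + K * Real.exp (-r * t) * (φg (z / Real.sqrt t + (r - 1 / 2) * Real.sqrt t)
          * (z * (-(1 / (2 * Real.sqrt t)) / Real.sqrt t ^ 2) + (r - 1 / 2) * (1 / (2 * Real.sqrt t)))))) t := by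
  have hs : Real.sqrt t ≠ 0 := (Real.sqrt_pos.mpr ht).ne'
  have hsq : HasDerivAt Real.sqrt (1 / (2 * Real.sqrt t)) t := Real.hasDerivAt_sqrt ht.ne'
  have h1 : HasDerivAt (fun s => z / Real.sqrt s)
      (z * (-(1 / (2 * Real.sqrt t)) / Real.sqrt t ^ 2)) t := by
    have := (hsq.inv hs).const_mul z
    simpa [div_eq_mul_inv] using this
  have hd : ∀ c : ℝ, HasDerivAt (fun s => z / Real.sqrt s + c * Real.sqrt s)
      (z * (-(1 / (2 * Real.sqrt t)) / Real.sqrt t ^ 2) + c * (1 / (2 * Real.sqrt t))) t :=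
    fun c => h1.add (hsq.const_mul c)
  have hΦ1 := (hasDerivAt_stdNormalCDF (z / Real.sqrt t + (r + 1 / 2) * Real.sqrt t)).comp t
      (hd (r + 1 / 2))
  have hΦ2 := (hasDerivAt_stdNormalCDF (z / Real.sqrt t + (r - 1 / 2) * Real.sqrt t)).comp t
      (hd (r - 1 / 2))
  have hexp : HasDerivAt (fun s : ℝ => Real.exp (-r * s)) (Real.exp (-r * t) * (-r)) t := by
    have : HasDerivAt (fun s : ℝ => -r * s) (-r) t := by
      simpa using (hasDerivAt_id t).const_mul (-r)
    exact this.exp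
  have h2 := (hexp.const_mul K).mul hΦ2
  have hA := hΦ1.const_mul (K * Real.exp z)
  have := hA.sub h2
  convert this using 1
  all_goals rfl

/-- The log-price Black–Scholes solution
`ω(t,z) = K e^z Φ(z/√t + (r+1/2)√t) − K e^{−rt} Φ(z/√t + (r−1/2)√t)`
satisfies `∂ω/∂t = (1/2) ∂²ω/∂z² + (r − 1/2) ∂ω/∂z − r ω` for `t > 0`. -/
theorem logPrice_blackScholes_pde (K r : ℝ) (hK : 0 < K) (hr : 0 < r)
    (ω : ℝ → ℝ → ℝ)
    (hω : ∀ t z, ω t z =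
      K * Real.exp z * stdNormalCDF (z / Real.sqrt t + (r + 1 / 2) * Real.sqrt t)
      - K * Real.exp (-r * t) * stdNormalCDF (z / Real.sqrt t + (r - 1 / 2) * Real.sqrt t)) :
    ∀ t > (0 : ℝ), ∀ z : ℝ,
      deriv (fun s => ω s z) t =
        1 / 2 * deriv (fun y => deriv (fun y' => ω t y') y) z
          + (r - 1 / 2) * deriv (fun y => ω t y) z - r * ω t z := by
  intro t ht z
  -- time derivative
  have hT : (fun s => ω s z) = fun s =>
      K * Real.exp z * stdNormalCDF (z / Real.sqrt s + (r + 1 / 2) * Real.sqrt s)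
      - K * Real.exp (-r * s) * stdNormalCDF (z / Real.sqrt s + (r - 1 / 2) * Real.sqrt s) :=
    funext fun s => hω s z
  have hZfun : (fun y => ω t y) = fun y =>
      K * Real.exp y * stdNormalCDF (y / Real.sqrt t + (r + 1 / 2) * Real.sqrt t)
      - K * Real.exp (-r * t) * stdNormalCDF (y / Real.sqrt t + (r - 1 / 2) * Real.sqrt t) :=
    funext fun y => hω t y
  have h2fun : (fun y => deriv (fun y' => ω t y') y) = fun y =>
      K * Real.exp y * stdNormalCDF (y / Real.sqrt t + (r + 1 / 2) * Real.sqrt t) := by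
    funext y
    have : (fun y' => ω t y') = fun y' =>
        K * Real.exp y' * stdNormalCDF (y' / Real.sqrt t + (r + 1 / 2) * Real.sqrt t)
        - K * Real.exp (-r * t) * stdNormalCDF (y' / Real.sqrt t + (r - 1 / 2) * Real.sqrt t) :=
      funext fun y' => hω t y'
    rw [this, deriv_z K r t ht y]
  -- second z-derivative
  have h2nd : deriv (fun y => K * Real.exp y
      * stdNormalCDF (y / Real.sqrt t + (r + 1 / 2) * Real.sqrt t)) z
      = K * Real.exp z * stdNormalCDF (z / Real.sqrt t + (r + 1 / 2) * Real.sqrt t)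
        + K * Real.exp z * (φg (z / Real.sqrt t + (r + 1 / 2) * Real.sqrt t) * (Real.sqrt t)⁻¹) := by
    have hd : HasDerivAt (fun y : ℝ => y / Real.sqrt t + (r + 1 / 2) * Real.sqrt t)
        ((Real.sqrt t)⁻¹) z := by
      simpa [one_div] using ((hasDerivAt_id z).div_const (Real.sqrt t)).add_const
        ((r + 1 / 2) * Real.sqrt t)
    have hΦ1 : HasDerivAt (fun y => stdNormalCDF (y / Real.sqrt t + (r + 1 / 2) * Real.sqrt t))
        (φg (z / Real.sqrt t + (r + 1 / 2) * Real.sqrt t) * (Real.sqrt t)⁻¹) z :=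
      by have := (hasDerivAt_stdNormalCDF (z / Real.sqrt t + (r + 1 / 2) * Real.sqrt t)).comp z hd; exact this
    have hE : HasDerivAt (fun y : ℝ => K * Real.exp y) (K * Real.exp z) z :=
      (Real.hasDerivAt_exp z).const_mul K
    exact (hE.mul hΦ1).deriv
  rw [hT, (hasDerivAt_t K r t ht z).deriv, h2fun, h2nd, hZfun, deriv_z K r t ht z, hω t z]
  linear_combination (z * (-(1 / (2 * Real.sqrt t)) / Real.sqrt t ^ 2)
    + (r - 1 / 2) * (1 / (2 * Real.sqrt t))) * key_id K r t ht z
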